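/- arXiv:1812.06872 — 2 statements merged into one kernel-verified Lean document; each statement's English description precedes it below -/
import Mathlib

section
/- Let R be a star-ordered ring, let p ∈ R with 0 ≤ p, let n be a positive integer, and let t₁, …, tₙ ∈ R. Set t := t₁ + ⋯ + tₙ. Then t* p t ≤ 2^{n−1} · (t₁* p t₁ + ⋯ + tₙ* p tₙ), where 2^{n−1} denotes the natural-number scalar multiple. -/
private lemma two_elem_aux
    {R : Type*} [NonUnitalRing R] [PartialOrder R] [StarRing R] [StarOrderedRing R]
    (p : R) (hp : 0 ≤ p) (a b : R) :
    star (a + b) * p * (a + b) ≤ 2 • (star a * p * a + star b * p * b) := by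
  have h0 : 0 ≤ star (a - b) * p * (a - b) := star_left_conjugate_nonneg hp _
  have key : star (a + b) * p * (a + b) + star (a - b) * p * (a - b)
      = 2 • (star a * p * a + star b * p * b) := by
    simp only [star_add, star_sub, two_smul]
    noncomm_ring
  calc star (a + b) * p * (a + b)
      ≤ star (a + b) * p * (a + b) + star (a - b) * p * (a - b) := le_add_of_nonneg_right h0
    _ = 2 • (star a * p * a + star b * p * b) := key

/-- Parallelogram (generalized Cauchy–Schwarz) inequality in a star-ordered ring:
for `0 ≤ p` and elements `t₁, …, tₙ` with sum `t`, one has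
`t* p t ≤ 2^(n-1) • (t₁* p t₁ + ⋯ + tₙ* p tₙ)`. -/
theorem star_mul_sum_le_pow_two_smul_sum
    {R : Type*} [NonUnitalRing R] [PartialOrder R] [StarRing R] [StarOrderedRing R]
    (p : R) (hp : 0 ≤ p) (n : ℕ) (hn : 0 < n) (t : Fin n → R) :
    star (∑ i, t i) * p * (∑ i, t i) ≤ 2 ^ (n - 1) • ∑ i, star (t i) * p * t i := by
  induction n with
  | zero => exact absurd hn (lt_irrefl 0)
  | succ n ih =>
    rcases Nat.eq_zero_or_pos n with h0 | hn'
    · subst h0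
      simp
    · have hsplit : (∑ i : Fin (n + 1), t i)
          = (∑ i : Fin n, t i.castSucc) + t (Fin.last n) := Fin.sum_univ_castSucc t
      have hsplit2 : (∑ i : Fin (n + 1), star (t i) * p * t i)
          = (∑ i : Fin n, star (t i.castSucc) * p * t i.castSucc)
            + star (t (Fin.last n)) * p * t (Fin.last n) :=
        Fin.sum_univ_castSucc _
      rw [hsplit, hsplit2]
      set S := ∑ i : Fin n, t i.castSucc with hS
      set a := t (Fin.last n) with ha
      calc star (S + a) * p * (S + a)
          ≤ 2 • (star S * p * S + star a * p * a) := two_elem_aux p hp S a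
        _ ≤ 2 • ((2 ^ (n - 1) • ∑ i : Fin n, star (t i.castSucc) * p * t i.castSucc)
              + star a * p * a) := by
            refine nsmul_le_nsmul_right ?_ 2
            exact add_le_add_left (ih hn' (fun i => t i.castSucc)) _
        _ ≤ 2 • ((2 ^ (n - 1) • ∑ i : Fin n, star (t i.castSucc) * p * t i.castSucc)
              + 2 ^ (n - 1) • (star a * p * a)) := by
            refine nsmul_le_nsmul_right (add_le_add_right ?_ _) 2
            calc star a * p * a = 1 • (star a * p * a) := (one_smul ℕ _).symm
              _ ≤ 2 ^ (n - 1) • (star a * p * a) :=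
                  nsmul_le_nsmul_left (star_left_conjugate_nonneg hp _) (Nat.one_le_two_pow)
        _ = 2 ^ (n + 1 - 1) • ((∑ i : Fin n, star (t i.castSucc) * p * t i.castSucc)
              + star a * p * a) := by
            rw [← smul_add, smul_smul]
            congr 1
            have : n + 1 - 1 = (n - 1) + 1 := by omega
            rw [this, pow_succ]
            ring
end

section
/- Let M be a von Neumann algebra acting on a complex Hilbert space H, and let τ : M → ℂ be a positive tracial linear functional. Let ε, δ > 0 and let A, B ∈ M be such that 0 ≤ A ≤ B and B ∈ O_τ(ε, δ). Then A ∈ O_τ(ε, 2δ). -/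
open scoped ComplexOrder
open ContinuousLinearMap Filter
namespace MeasureNbhdAux
variable {H : Type*} [NormedAddCommGroup H] [InnerProductSpace ℂ H] [CompleteSpace H]
local notation "𝔹" => H →L[ℂ] H




lemma isClosed_setCentralizer (s : Set 𝔹) : IsClosed (Set.centralizer s) := by
  have : Set.centralizer s = ⋂ m ∈ s, {c : 𝔹 | m * c = c * m} := by
    ext c; simp [Set.mem_centralizer_iff]
  rw [this]
  exact isClosed_biInter fun m _ => isClosed_eq (continuous_mul_left m) (continuous_mul_right m)

lemma commute_cfc {a z : 𝔹} (ha : IsSelfAdjoint a) (h1 : z * a = a * z)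
    (h2 : star z * a = a * star z) (f : ℝ → ℝ) : z * cfc f a = cfc f a * z := by
  rw [cfc_real_eq_complex f ha]
  set g : ℂ → ℂ := fun x => (f x.re : ℂ) with hgdef
  by_cases hg : ContinuousOn g (spectrum ℂ a)
  · have hmem : cfc g a ∈ StarAlgebra.elemental ℂ a := by
      have := ha.isStarNormal
      rw [cfc_apply g a, cfcHom_eq_of_isStarNormal]
      exact SetLike.coe_mem _
    have hclosed : IsClosed ((StarSubalgebra.centralizer ℂ ({z} : Set 𝔹) : Set 𝔹)) := by
      rw [StarSubalgebra.coe_centralizer]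
      exact isClosed_setCentralizer _
    have haz : a ∈ StarSubalgebra.centralizer ℂ ({z} : Set 𝔹) := by
      rw [StarSubalgebra.mem_centralizer_iff]
      rintro g' rfl
      exact ⟨h1, h2⟩
    have := StarAlgebra.elemental.le_of_mem hclosed haz hmem
    rw [StarSubalgebra.mem_centralizer_iff] at this
    exact (this z rfl).1
  · rw [cfc_apply_of_not_continuousOn a hg]
    simp

variable {M : VonNeumannAlgebra H}

lemma star_commutes {z : 𝔹} (hz : ∀ m ∈ M, m * z = z * m) :
    ∀ m ∈ M, m * star z = star z * m := by
  intro m hm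
  have h := hz (star m) (star_mem hm)
  calc m * star z = star (z * star m) := by simp
  _ = star (star m * z) := by rw [h]
  _ = star z * m := by simp

lemma mem_of_forall_commute {x : 𝔹}
    (h : ∀ z : 𝔹, (∀ m ∈ M, m * z = z * m) → z * x = x * z) : x ∈ M := by
  have hx : x ∈ (M : Set 𝔹) := by
    rw [← M.centralizer_centralizer, Set.mem_centralizer_iff]
    intro z hz
    rw [Set.mem_centralizer_iff] at hz
    exact h z (fun m hm => hz m hm)
  exact hx

lemma cfc_mem {a : 𝔹} (haM : a ∈ M) (ha : IsSelfAdjoint a) (f : ℝ → ℝ) :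
    cfc f a ∈ M := by
  apply mem_of_forall_commute
  intro z hz
  exact commute_cfc ha ((hz a haM).symm) ((star_commutes hz a haM).symm) f


lemma re_inner_le_of_le {S T : 𝔹} (h : S ≤ T) (x : H) :
    RCLike.re (inner ℂ (S x) x : ℂ) ≤ RCLike.re (inner ℂ (T x) x : ℂ) := by
  have := ((le_def S T).1 h).re_inner_nonneg_left x
  rw [sub_apply, inner_sub_left, map_sub] at this
  linarith

lemma re_inner_sq {S : 𝔹} (hS : IsSelfAdjoint S) (x : H) :
    RCLike.re (inner ℂ ((S * S) x) x : ℂ) = ‖S x‖ ^ 2 := by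
  rw [mul_apply_eq_comp]
  have h := (isSelfAdjoint_iff_isSymmetric.1 hS) (S x) x
  simp only [ContinuousLinearMap.coe_coe] at h
  rw [h]
  exact inner_self_eq_norm_sq (S x)

omit [CompleteSpace H] in
lemma re_inner_real_smul (η : ℝ) (x : H) :
    RCLike.re (inner ℂ (η • x) x : ℂ) = η * ‖x‖ ^ 2 := by
  rw [RCLike.real_smul_eq_coe_smul (K := ℂ), inner_smul_left]
  simp [inner_self_eq_norm_sq, ← Complex.ofReal_pow]

set_option maxHeartbeats 1000000 in
/-- If `R` is positive and `R y = 0` then `cfc f R y = f 0 • y`. -/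
lemma cfc_apply_ker {R : 𝔹} (hR : (0 : 𝔹) ≤ R) (f : ℝ → ℝ)
    (hf : ContinuousOn f (spectrum ℝ R)) {y : H} (hy : R y = 0) :
    cfc f R y = f 0 • y := by
  have hRsa : IsSelfAdjoint R := ((nonneg_iff_isPositive R).1 hR).isSelfAdjoint
  by_cases hy0 : y = 0
  · simp [hy0]
  have h0 : (0 : ℝ) ∈ spectrum ℝ R := by
    rw [spectrum.zero_mem_iff]
    rintro ⟨u, hu⟩
    apply hy0
    calc y = ((↑u⁻¹ * ↑u : 𝔹)) y := by rw [u.inv_mul]; simp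
    _ = (↑u⁻¹ : 𝔹) (R y) := by rw [mul_apply_eq_comp, hu]
    _ = 0 := by rw [hy, map_zero]
  set f' : ℝ → ℝ := fun l => f l - f 0 with hf'def
  have hf' : ContinuousOn f' (spectrum ℝ R) := hf.sub continuousOn_const
  have main : cfc f' R y = 0 := by
    set S := cfc f' R with hSdef
    have hSsa : IsSelfAdjoint S := cfc_predicate f' R
    have hn : ∀ η : ℝ, 0 < η → ‖S y‖ ^ 2 ≤ η * ‖y‖ ^ 2 := by
      intro η hη
      have hcw : ContinuousWithinAt (fun l => f' l * f' l) (spectrum ℝ R) 0 :=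
        ((hf'.mul hf').continuousWithinAt h0)
      have hf'0 : f' 0 * f' 0 = 0 := by simp [hf'def]
      obtain ⟨d, hd, hdlt⟩ := Metric.continuousWithinAt_iff.1 hcw η hη
      obtain ⟨Mb, hMb⟩ := (spectrum.isCompact (𝕜 := ℝ) R).exists_bound_of_continuousOn hf'
      set c : ℝ := Mb ^ 2 / d with hcdef
      have hMb0 : 0 ≤ Mb := le_trans (norm_nonneg _) (hMb 0 h0)
      have hc0 : 0 ≤ c := by positivity
      have hspec : ∀ l ∈ spectrum ℝ R, 0 ≤ l := spectrum_nonneg_of_nonneg hR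
      have hptwise : ∀ l ∈ spectrum ℝ R, f' l * f' l ≤ η + c * l := by
        intro l hl
        rcases lt_or_ge l d with hld | hld
        · have hdd := hdlt hl (by simpa [Real.dist_eq, abs_of_nonneg (hspec l hl)] using hld)
          rw [Real.dist_eq, hf'0, sub_zero] at hdd
          have h1 : f' l * f' l ≤ |f' l * f' l| := le_abs_self _
          nlinarith [mul_nonneg hc0 (hspec l hl)]
        · have h1 : |f' l| ≤ Mb := hMb l hl
          have h2 : f' l * f' l ≤ Mb ^ 2 := by
            nlinarith [abs_nonneg (f' l), neg_abs_le (f' l), le_abs_self (f' l)]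
          have h3 : Mb ^ 2 ≤ c * l := by
            have hcd : c * d = Mb ^ 2 := div_mul_cancel₀ _ (ne_of_gt hd)
            calc Mb ^ 2 = c * d := hcd.symm
            _ ≤ c * l := mul_le_mul_of_nonneg_left hld hc0
          linarith
      have hop : cfc (fun l => f' l * f' l) R ≤ cfc (fun l => η + c * l) R := by
        apply cfc_mono hptwise (hf'.mul hf')
      have hlhs : cfc (fun l => f' l * f' l) R = S * S := cfc_mul f' f' R hf' hf'
      have hrhs : cfc (fun l => η + c * l) R = η • (1 : 𝔹) + c • R := by
        rw [cfc_add R (fun _ => η) (fun l => c * l) continuousOn_const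
          (continuousOn_const.mul continuousOn_id), cfc_const η R,
          cfc_const_mul c (fun l => l) R continuousOn_id, cfc_id' ℝ R,
          Algebra.algebraMap_eq_smul_one]
      rw [hlhs, hrhs] at hop
      have hle := re_inner_le_of_le hop y
      rw [re_inner_sq hSsa] at hle
      have happ : ((η • (1 : 𝔹) + c • R) y) = η • y := by
        rw [add_apply, smul_apply, smul_apply, one_apply_eq_self, hy, smul_zero, add_zero]
      rw [happ, re_inner_real_smul] at hle
      exact hle
    have hsq : ‖S y‖ ^ 2 ≤ 0 := by
      by_contra hcon
      push_neg at hcon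
      have hy2 : 0 < ‖y‖ ^ 2 := by
        have := norm_pos_iff.2 hy0
        positivity
      have hq := hn (‖S y‖ ^ 2 / 2 / ‖y‖ ^ 2) (div_pos (by linarith) hy2)
      rw [div_mul_cancel₀ _ (ne_of_gt hy2)] at hq
      linarith
    have hnz : ‖S y‖ = 0 := by nlinarith [norm_nonneg (S y)]
    exact norm_eq_zero.1 hnz
  have hsplit : cfc f R = cfc f' R + algebraMap ℝ 𝔹 (f 0) := by
    have h : f = fun l => f' l + f 0 := by funext l; simp [hf'def]
    conv_lhs => rw [h]
    rw [cfc_add R f' (fun _ => f 0) hf' continuousOn_const, cfc_const (f 0) R hRsa]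
  rw [hsplit, add_apply, main, zero_add, Algebra.algebraMap_eq_smul_one, smul_apply, one_apply_eq_self]


lemma dense_range_sup_ker {R : 𝔹} (hRsa : IsSelfAdjoint R) :
    Dense ((LinearMap.range (R : H →ₗ[ℂ] H) ⊔ LinearMap.ker (R : H →ₗ[ℂ] H) : Submodule ℂ H) : Set H) := by
  set D : Submodule ℂ H := LinearMap.range (R : H →ₗ[ℂ] H) ⊔ LinearMap.ker (R : H →ₗ[ℂ] H) with hD
  have hsym := isSelfAdjoint_iff_isSymmetric.1 hRsa
  have horth : Dᗮ = ⊥ := by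
    rw [Submodule.eq_bot_iff]
    intro x hx
    rw [Submodule.mem_orthogonal] at hx
    have hRx : R x = 0 := by
      have h1 : (inner ℂ (R (R x)) x : ℂ) = 0 :=
        hx _ (Submodule.mem_sup_left (LinearMap.mem_range_self (R : H →ₗ[ℂ] H) (R x)))
      have h2 := hsym (R x) x
      simp only [ContinuousLinearMap.coe_coe] at h2
      rw [h2] at h1
      exact inner_self_eq_zero.1 h1
    have h3 : (inner ℂ x x : ℂ) = 0 :=
      hx _ (Submodule.mem_sup_right (LinearMap.mem_ker.2 hRx))
    exact inner_self_eq_zero.1 h3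
  have htop : D.topologicalClosure = ⊤ := Submodule.topologicalClosure_eq_top_iff.2 horth
  rw [dense_iff_closure_eq, ← Submodule.topologicalClosure_coe, htop, Submodule.top_coe]

lemma polar_machine {T R : 𝔹} (hRpos : (0:𝔹) ≤ R) (hTR : ∀ x, ‖T x‖ = ‖R x‖) :
    ∃ v : 𝔹,
      (∀ x : H, Tendsto (fun n : ℕ => (T * cfc (fun l : ℝ => (l + ((n:ℝ)+1)⁻¹)⁻¹) R) x)
        atTop (nhds (v x))) ∧
      (∀ x, ‖v x‖ ≤ ‖x‖) ∧ v * R = T ∧ (∀ y, R y = 0 → v y = 0) := by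
  have hRsa : IsSelfAdjoint R := ((nonneg_iff_isPositive R).1 hRpos).isSelfAdjoint
  have hspec : ∀ l ∈ spectrum ℝ R, 0 ≤ l := spectrum_nonneg_of_nonneg hRpos
  set e : ℕ → ℝ := fun n => ((n:ℝ)+1)⁻¹ with hedef
  have he : ∀ n, 0 < e n := fun n => by positivity
  set w : ℕ → ℝ → ℝ := fun n l => (l + e n)⁻¹ with hwdef
  have hwcont : ∀ n, ContinuousOn (w n) (spectrum ℝ R) := by
    intro n
    apply ContinuousOn.inv₀ (by fun_prop)
    intro l hl
    have := hspec l hl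
    have := he n
    positivity
  set vn : ℕ → 𝔹 := fun n => T * cfc (w n) R with hvndef
  have hTker : ∀ y, R y = 0 → T y = 0 := by
    intro y hy
    have : ‖T y‖ = 0 := by rw [hTR, hy, norm_zero]
    exact norm_eq_zero.1 this
  have hTnorm : ∀ (h : ℝ → ℝ), ContinuousOn h (spectrum ℝ R) → ∀ x,
      ‖T (cfc h R x)‖ = ‖(cfc (fun l => l * h l) R) x‖ := by
    intro h hh x
    rw [hTR]
    have hmul : cfc (fun l => l * h l) R = R * cfc h R := by
      rw [cfc_mul (fun l => l) h R continuousOn_id hh, cfc_id' ℝ R hRsa]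
    rw [hmul, mul_apply_eq_comp]
  have hbound : ∀ n x, ‖vn n x‖ ≤ ‖x‖ := by
    intro n x
    rw [hvndef]
    simp only [mul_apply_eq_comp]
    rw [hTnorm (w n) (hwcont n) x]
    calc ‖(cfc (fun l => l * w n l) R) x‖ ≤ ‖cfc (fun l => l * w n l) R‖ * ‖x‖ := le_opNorm _ _
    _ ≤ 1 * ‖x‖ := by
        gcongr
        apply norm_cfc_le zero_le_one
        intro l hl
        have h0 : 0 ≤ l := hspec l hl
        have h1 : 0 < l + e n := by have := he n; positivity
        rw [Real.norm_eq_abs, abs_of_nonneg (by positivity), ← div_eq_mul_inv]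
        rw [div_le_one h1]
        linarith [he n]
    _ = ‖x‖ := one_mul _
  have hconv_range : ∀ (n : ℕ) (z : H), ‖vn n (R z) - T z‖ ≤ e n * ‖z‖ := by
    intro n z
    have hq : ∀ l ∈ spectrum ℝ R, w n l * l - 1 = -(e n * (l + e n)⁻¹) := by
      intro l hl
      have h1 : 0 < l + e n := by have := hspec l hl; have := he n; positivity
      rw [hwdef]
      field_simp
      ring
    have hcomp : vn n (R z) = T (cfc (fun l => w n l * l) R z) := by
      rw [hvndef]
      simp only [mul_apply_eq_comp]
      congr 1
      have h8 : cfc (fun l => w n l * l) R = cfc (w n) R * R := by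
        rw [cfc_mul (w n) (fun l => l) R (hwcont n) continuousOn_id, cfc_id' ℝ R hRsa]
      rw [h8, mul_apply_eq_comp]
    have hcfc : cfc (fun l => w n l * l - 1) R = cfc (fun l => w n l * l) R - 1 := by
      rw [cfc_sub (fun l => w n l * l) (fun _ => (1:ℝ)) R ((hwcont n).mul continuousOn_id)
        continuousOn_const]
      rw [cfc_const (1:ℝ) R hRsa, map_one]
    have hsub : vn n (R z) - T z = T (cfc (fun l => w n l * l - 1) R z) := by
      rw [hcomp, hcfc, sub_apply, one_apply_eq_self, map_sub]
    rw [hsub, hTnorm (fun l => w n l * l - 1) (((hwcont n).mul continuousOn_id).sub continuousOn_const) z]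
    calc ‖(cfc (fun l => l * (w n l * l - 1)) R) z‖
        ≤ ‖cfc (fun l => l * (w n l * l - 1)) R‖ * ‖z‖ := le_opNorm _ _
    _ ≤ e n * ‖z‖ := by
        gcongr
        apply norm_cfc_le (he n).le
        intro l hl
        have h0 : 0 ≤ l := hspec l hl
        have h1 : 0 < l + e n := by have := he n; positivity
        rw [hq l hl, Real.norm_eq_abs]
        rw [mul_neg, abs_neg, ← mul_assoc, mul_comm l (e n), mul_assoc]
        rw [abs_of_nonneg (by positivity)]
        have h2 : l * (l + e n)⁻¹ ≤ 1 := by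
          rw [← div_eq_mul_inv, div_le_one h1]; linarith [he n]
        nlinarith [(he n).le]
  have hconv_ker : ∀ (n : ℕ) (y : H), R y = 0 → vn n y = 0 := by
    intro n y hy
    rw [hvndef]
    simp only [mul_apply_eq_comp]
    rw [cfc_apply_ker hRpos (w n) (hwcont n) hy, map_smul_of_tower, hTker y hy, smul_zero]
  -- Cauchy + limits
  have hcauchy : ∀ x : H, ∃ L, Tendsto (fun n => vn n x) atTop (nhds L) := by
    intro x
    apply cauchySeq_tendsto_of_complete
    rw [Metric.cauchySeq_iff]
    intro ε hε
    obtain ⟨dd, hdD, hdist⟩ :=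
      Metric.mem_closure_iff.1 ((dense_range_sup_ker hRsa) x) (ε/4) (by positivity)
    obtain ⟨a, ha, b, hb, hab⟩ := Submodule.mem_sup.1 hdD
    obtain ⟨z, hz⟩ := LinearMap.mem_range.1 ha
    have hbker : R b = 0 := LinearMap.mem_ker.1 hb
    have hvd : ∀ n, vn n dd = vn n (R z) := by
      intro n
      rw [← hab, map_add, hconv_ker n b hbker, add_zero, ← hz, ContinuousLinearMap.coe_coe]
    obtain ⟨N, hN⟩ := exists_nat_gt (4 * ‖z‖ / ε)
    refine ⟨N, fun m hm n hn => ?_⟩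
    have key : ∀ k, N ≤ k → dist (vn k x) (T z) < ε/2 := by
      intro k hk
      have h1 : dist (vn k x) (vn k dd) < ε/4 := by
        rw [dist_eq_norm, ← map_sub]
        calc ‖vn k (x - dd)‖ ≤ ‖x - dd‖ := hbound k _
        _ < ε/4 := by rw [← dist_eq_norm]; exact hdist
      have h2 : dist (vn k dd) (T z) ≤ e k * ‖z‖ := by
        rw [hvd k, dist_eq_norm]
        exact hconv_range k z
      have h3 : e k * ‖z‖ < ε/4 := by
        have hek : e k ≤ e N := by
          rw [hedef]
          apply inv_anti₀ (by positivity)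
          have : (N:ℝ) ≤ (k:ℝ) := Nat.cast_le.2 hk
          linarith
        have h4 : e N * ‖z‖ < ε/4 := by
          rw [hedef]
          have hN1 : (0:ℝ) < (N:ℝ) + 1 := by positivity
          rw [inv_mul_eq_div, div_lt_iff₀ hN1]
          rw [div_lt_iff₀ hε] at hN
          nlinarith [norm_nonneg z]
        calc e k * ‖z‖ ≤ e N * ‖z‖ := by
              apply mul_le_mul_of_nonneg_right hek (norm_nonneg z)
        _ < ε/4 := h4
      calc dist (vn k x) (T z) ≤ dist (vn k x) (vn k dd) + dist (vn k dd) (T z) :=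
            dist_triangle _ _ _
      _ < ε/4 + ε/4 := by linarith
      _ = ε/2 := by ring
    calc dist (vn m x) (vn n x) ≤ dist (vn m x) (T z) + dist (T z) (vn n x) := dist_triangle _ _ _
    _ < ε/2 + ε/2 := by
        have := key m hm
        have h5 := key n hn
        rw [dist_comm] at h5
        exact add_lt_add this h5
    _ = ε := by ring
  choose F hF using hcauchy
  have hFadd : ∀ x y, F (x + y) = F x + F y := by
    intro x y
    refine tendsto_nhds_unique ?_ ((hF x).add (hF y))
    have : (fun n => vn n (x + y)) = fun n => vn n x + vn n y := by
      funext n; rw [map_add]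
    rw [← this]
    exact hF (x + y)
  have hFsmul : ∀ (c : ℂ) (x : H), F (c • x) = c • F x := by
    intro c x
    refine tendsto_nhds_unique ?_ ((hF x).const_smul c)
    have : (fun n => vn n (c • x)) = fun n => c • vn n x := by
      funext n; rw [map_smul]
    rw [← this]
    exact hF (c • x)
  set vL : H →ₗ[ℂ] H :=
    { toFun := F, map_add' := hFadd, map_smul' := hFsmul } with hvL
  have hFbd : ∀ x, ‖F x‖ ≤ 1 * ‖x‖ := by
    intro x
    apply le_of_tendsto (hF x).norm
    exact Filter.Eventually.of_forall fun n => by simpa using hbound n x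
  refine ⟨vL.mkContinuous 1 hFbd, ?_, ?_, ?_, ?_⟩
  · intro x
    exact hF x
  · intro x
    exact (by simpa using hFbd x : ‖F x‖ ≤ ‖x‖)
  · ext z
    rw [mul_apply_eq_comp]
    have htz : Tendsto (fun n => vn n (R z)) atTop (nhds (T z)) := by
      rw [tendsto_iff_norm_sub_tendsto_zero]
      apply squeeze_zero_norm (fun n => by simpa using hconv_range n z)
      have h6 : Tendsto (fun n : ℕ => e n * ‖z‖) atTop (nhds (0 * ‖z‖)) := by
        apply Tendsto.mul_const
        rw [hedef]
        simpa [one_div] using tendsto_one_div_add_atTop_nhds_zero_nat (𝕜 := ℝ)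
      simpa using h6
    exact tendsto_nhds_unique (hF (R z)) htz
  · intro y hy
    have h7 : Tendsto (fun n => vn n y) atTop (nhds (0:H)) := by
      have : (fun n => vn n y) = fun _ => (0:H) := by
        funext n; exact hconv_ker n y hy
      rw [this]
      exact tendsto_const_nhds
    exact tendsto_nhds_unique (hF y) h7


lemma eq_of_forall_inner_eq {w1 w2 : H} {s : Set H} (hs : Dense s)
    (h : ∀ u ∈ s, (inner ℂ w1 u : ℂ) = inner ℂ w2 u) : w1 = w2 := by
  have hall : ∀ u : H, (inner ℂ (w1 - w2) u : ℂ) = 0 := by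
    intro u
    have hcl : IsClosed {u : H | (inner ℂ (w1 - w2) u : ℂ) = 0} :=
      isClosed_eq (Continuous.inner continuous_const continuous_id) continuous_const
    have hsub : s ⊆ {u : H | (inner ℂ (w1 - w2) u : ℂ) = 0} := by
      intro u hu
      simp only [Set.mem_setOf_eq, inner_sub_left, h u hu, sub_self]
    exact closure_minimal hsub hcl (hs u)
  have h2 := hall (w1 - w2)
  rw [inner_self_eq_zero] at h2
  exact sub_eq_zero.1 h2

lemma commute_of_tendsto {v : 𝔹} {vs : ℕ → 𝔹}
    (hv : ∀ x, Tendsto (fun n => vs n x) atTop (nhds (v x))) {z : 𝔹}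
    (hc : ∀ n, z * vs n = vs n * z) : z * v = v * z := by
  ext x
  rw [mul_apply_eq_comp, mul_apply_eq_comp]
  have h2 : Tendsto (fun n => z (vs n x)) atTop (nhds (z (v x))) :=
    ((z.continuous.tendsto _).comp (hv x))
  have h3 : (fun n => z (vs n x)) = fun n => vs n (z x) := by
    funext n; rw [← mul_apply_eq_comp, hc n, mul_apply_eq_comp]
  rw [h3] at h2
  exact tendsto_nhds_unique h2 (hv (z x))

lemma selfadjoint_of_tendsto {v : 𝔹} {vs : ℕ → 𝔹}
    (hv : ∀ x, Tendsto (fun n => vs n x) atTop (nhds (v x)))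
    (h : ∀ n, IsSelfAdjoint (vs n)) : IsSelfAdjoint v := by
  rw [isSelfAdjoint_iff_isSymmetric]
  intro x y
  have h1 : Tendsto (fun n => (inner ℂ (vs n x) y : ℂ)) atTop (nhds (inner ℂ (v x) y)) :=
    (hv x).inner tendsto_const_nhds
  have h2 : Tendsto (fun n => (inner ℂ x (vs n y) : ℂ)) atTop (nhds (inner ℂ x (v y))) :=
    tendsto_const_nhds.inner (hv y)
  have h3 : (fun n => (inner ℂ (vs n x) y : ℂ)) = fun n => inner ℂ x (vs n y) := by
    funext n
    have := isSelfAdjoint_iff_isSymmetric.1 (h n) x y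
    simpa using this
  rw [h3] at h1
  have h4 := tendsto_nhds_unique h1 h2
  simpa using h4

lemma machine_mem {T R : 𝔹} (hTM : T ∈ M) (hRM : R ∈ M) (hRsa : IsSelfAdjoint R) {v : 𝔹}
    (hv : ∀ x, Tendsto (fun n : ℕ => (T * cfc (fun l : ℝ => (l + ((n:ℝ)+1)⁻¹)⁻¹) R) x)
      atTop (nhds (v x))) : v ∈ M := by
  apply mem_of_forall_commute
  intro z hz
  apply commute_of_tendsto hv
  intro n
  have h1 : z * cfc (fun l : ℝ => (l + ((n:ℝ)+1)⁻¹)⁻¹) R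
      = cfc (fun l : ℝ => (l + ((n:ℝ)+1)⁻¹)⁻¹) R * z :=
    commute_cfc hRsa ((hz R hRM).symm) ((star_commutes hz R hRM).symm) _
  have h2 : z * T = T * z := (hz T hTM).symm
  rw [← mul_assoc, h2, mul_assoc, h1, ← mul_assoc]

lemma sqrt_mul_self_op {X : 𝔹} (hX : (0:𝔹) ≤ X) :
    cfc Real.sqrt X * cfc Real.sqrt X = X := by
  rw [← cfc_mul Real.sqrt Real.sqrt X Real.continuous_sqrt.continuousOn
    Real.continuous_sqrt.continuousOn]
  have h : (spectrum ℝ X).EqOn (fun l => Real.sqrt l * Real.sqrt l) (fun l => l) :=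
    fun l hl => Real.mul_self_sqrt (spectrum_nonneg_of_nonneg hX hl)
  rw [cfc_congr h, cfc_id' ℝ X (((nonneg_iff_isPositive X).1 hX).isSelfAdjoint)]

lemma ker_of_re_inner_nonpos {R : 𝔹} (hR : (0:𝔹) ≤ R) {u : H}
    (h : RCLike.re (inner ℂ (R u) u : ℂ) ≤ 0) : R u = 0 := by
  set s := cfc Real.sqrt R with hsdef
  have hssa : IsSelfAdjoint s := cfc_predicate _ _
  have hss : s * s = R := sqrt_mul_self_op hR
  have h2 : ‖s u‖ ^ 2 ≤ 0 := by
    rw [← re_inner_sq hssa, hss]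
    exact h
  have h3 : s u = 0 := by
    have h4 := norm_nonneg (s u)
    have h5 : ‖s u‖ = 0 := by nlinarith
    exact norm_eq_zero.1 h5
  rw [← hss, mul_apply_eq_comp, h3, map_zero]

lemma norm_idem_sa_apply_le {Q : 𝔹} (hQ : Q * Q = Q) (hQsa : IsSelfAdjoint Q) (x : H) :
    ‖Q x‖ ≤ ‖x‖ := by
  rcases eq_or_ne (Q x) 0 with h | h
  · rw [h, norm_zero]; exact norm_nonneg x
  · have h1 : ‖Q x‖ ^ 2 = RCLike.re (inner ℂ (Q x) x : ℂ) := by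
      rw [← re_inner_sq hQsa x, hQ]
    have h2 : RCLike.re (inner ℂ (Q x) x : ℂ) ≤ ‖Q x‖ * ‖x‖ :=
      le_trans (RCLike.re_le_norm _) (norm_inner_le_norm _ _)
    have h4 : 0 < ‖Q x‖ := norm_pos_iff.2 h
    nlinarith

end MeasureNbhdAux

/-- The fundamental neighborhood `O_τ(ε, δ)` of `0` for the measure topology on a
von Neumann algebra `M` with positive tracial functional `τ`: those `A ∈ M` for which there is
a projection `E ∈ M` with `‖A E‖ ≤ ε` and `τ(1 - E) ≤ δ`. -/
def measureNbhd {H : Type*} [NormedAddCommGroup H] [InnerProductSpace ℂ H] [CompleteSpace H]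
    (M : VonNeumannAlgebra H) (τ : (H →L[ℂ] H) →ₗ[ℂ] ℂ) (ε δ : ℝ) :
    Set (H →L[ℂ] H) :=
  {A | A ∈ M ∧ ∃ E : H →L[ℂ] H, E ∈ M ∧ IsIdempotentElem E ∧ IsSelfAdjoint E ∧
    ‖A * E‖ ≤ ε ∧ τ (1 - E) ≤ (δ : ℂ)}

open MeasureNbhdAux ContinuousLinearMap Filter in
set_option maxHeartbeats 2000000 in
/-- If `0 ≤ A ≤ B` in `M` (in the sense that `A` and `B - A` are positive operators)
and `B ∈ O_τ(ε, δ)`, then `A ∈ O_τ(ε, 2δ)`. -/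
theorem measureNbhd_of_le
    {H : Type*} [NormedAddCommGroup H] [InnerProductSpace ℂ H] [CompleteSpace H]
    (M : VonNeumannAlgebra H) (τ : (H →L[ℂ] H) →ₗ[ℂ] ℂ)
    (hpos : ∀ a : H →L[ℂ] H, a ∈ M → 0 ≤ τ (star a * a))
    (htrace : ∀ a ∈ M, ∀ b ∈ M, τ (a * b) = τ (b * a))
    (ε δ : ℝ) (hε : 0 < ε) (hδ : 0 < δ)
    (A B : H →L[ℂ] H) (hAM : A ∈ M)
    (hApos : A.IsPositive) (hAB : (B - A).IsPositive)
    (hB : B ∈ measureNbhd M τ ε δ) :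
    A ∈ measureNbhd M τ ε (2 * δ) := by
  classical
  obtain ⟨hBM, E, hEM, hEidem, hEsa, hBE, hτE⟩ := hB
  have hAsa : IsSelfAdjoint A := hApos.isSelfAdjoint
  have hA0 : (0 : H →L[ℂ] H) ≤ A := (nonneg_iff_isPositive A).2 hApos
  set g : ℝ → ℝ := fun l => max (l - ε) 0 with hgdef
  have hgcont : Continuous g := (continuous_id.sub continuous_const).max continuous_const
  set R₀ : H →L[ℂ] H := cfc g A with hR₀def
  have hR₀sa : IsSelfAdjoint R₀ := cfc_predicate g A
  have hR₀pos : (0 : H →L[ℂ] H) ≤ R₀ := cfc_nonneg (fun x _ => le_max_right _ _)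
  have hR₀M : R₀ ∈ M := cfc_mem hAM hAsa g
  -- the operator identity A R₀ = ε R₀ + R₀²
  have hfun : ∀ l : ℝ, l * g l = ε * g l + g l * g l := by
    intro l
    rcases le_or_gt l ε with h | h
    · simp [hgdef, max_eq_right (sub_nonpos.2 h)]
    · have hgl : g l = l - ε := max_eq_left (by linarith)
      simp only [hgdef] at hgl ⊢
      rw [hgl]; ring
  have hAR₀ : A * R₀ = ε • R₀ + R₀ * R₀ := by
    have h1 : cfc (fun l => l * g l) A = A * R₀ := by
      rw [cfc_mul (fun l => l) g A continuousOn_id hgcont.continuousOn, cfc_id' ℝ A hAsa]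
    have h2 : cfc (fun l => ε * g l) A = ε • R₀ := cfc_const_mul ε g A hgcont.continuousOn
    have h3 : cfc (fun l => g l * g l) A = R₀ * R₀ :=
      cfc_mul g g A hgcont.continuousOn hgcont.continuousOn
    calc A * R₀ = cfc (fun l => l * g l) A := h1.symm
    _ = cfc (fun l => ε * g l + g l * g l) A := cfc_congr (fun l _ => hfun l)
    _ = ε • R₀ + R₀ * R₀ := by
        rw [cfc_add A (fun l => ε * g l) (fun l => g l * g l)
          (continuousOn_const.mul hgcont.continuousOn)
          (hgcont.continuousOn.mul hgcont.continuousOn), h2, h3]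
  -- Machine 1 : the range projection P of R₀
  obtain ⟨P, hPt, hPbd, hPR, hPker⟩ :=
    polar_machine (T := R₀) (R := R₀) hR₀pos (fun x => rfl)
  have hvn1 : ∀ n : ℕ, R₀ * cfc (fun l : ℝ => (l + ((n:ℝ)+1)⁻¹)⁻¹) R₀
      = cfc (fun l : ℝ => l * (l + ((n:ℝ)+1)⁻¹)⁻¹) R₀ := by
    intro n
    have hwc : ContinuousOn (fun l : ℝ => (l + ((n:ℝ)+1)⁻¹)⁻¹) (spectrum ℝ R₀) := by
      apply ContinuousOn.inv₀ (by fun_prop)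
      intro l hl
      have h0 : 0 ≤ l := spectrum_nonneg_of_nonneg hR₀pos hl
      positivity
    rw [cfc_mul (fun l => l) _ R₀ continuousOn_id hwc, cfc_id' ℝ R₀ hR₀sa]
  have hPsa : IsSelfAdjoint P := by
    apply selfadjoint_of_tendsto hPt
    intro n
    rw [hvn1 n]
    exact cfc_predicate _ _
  have hPM : P ∈ M := machine_mem hR₀M hR₀M hR₀sa hPt
  have hPP : P * P = P := by
    apply ContinuousLinearMap.ext_on
      (s := ((LinearMap.range (R₀ : H →ₗ[ℂ] H) ⊔ LinearMap.ker (R₀ : H →ₗ[ℂ] H) : Submodule ℂ H) : Set H))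
      (by rw [Submodule.span_eq]; exact dense_range_sup_ker hR₀sa)
    intro u hu
    obtain ⟨a, ha, b, hb, rfl⟩ := Submodule.mem_sup.1 hu
    obtain ⟨z, rfl⟩ := LinearMap.mem_range.1 ha
    have hbk : R₀ b = 0 := LinearMap.mem_ker.1 hb
    have hPRz : P (R₀ z) = R₀ z := by
      have := DFunLike.congr_fun hPR z
      rwa [mul_apply_eq_comp] at this
    simp only [ContinuousLinearMap.coe_coe, mul_apply_eq_comp, map_add, hPRz, hPker b hbk, add_zero, map_zero]
  have hR₀P : R₀ * P = R₀ := by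
    have := congrArg star hPR
    rwa [star_mul, hPsa.star_eq, hR₀sa.star_eq] at this
  have hPmem_cl : ∀ x, P x ∈ closure (Set.range R₀) := by
    intro x
    apply mem_closure_of_tendsto (hPt x)
    apply Eventually.of_forall
    intro n
    rw [mul_apply_eq_comp]
    exact Set.mem_range_self _
  -- the E-side bound
  have hEA : ∀ u : H, E u = u → RCLike.re (inner ℂ (A u) u : ℂ) ≤ ε * ‖u‖ ^ 2 := by
    intro u hu
    have h1 : RCLike.re (inner ℂ (A u) u : ℂ) ≤ RCLike.re (inner ℂ (B u) u : ℂ) := by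
      have := hAB.re_inner_nonneg_left u
      rw [sub_apply, inner_sub_left, map_sub] at this
      linarith
    have h2 : RCLike.re (inner ℂ (B u) u : ℂ) ≤ ‖(B * E) u‖ * ‖u‖ := by
      calc RCLike.re (inner ℂ (B u) u : ℂ) ≤ ‖(inner ℂ (B u) u : ℂ)‖ := RCLike.re_le_norm _
      _ ≤ ‖B u‖ * ‖u‖ := norm_inner_le_norm _ _
      _ = ‖(B * E) u‖ * ‖u‖ := by rw [mul_apply_eq_comp, hu]
    have h3 : ‖(B * E) u‖ ≤ ε * ‖u‖ :=
      le_trans (le_opNorm _ u) (mul_le_mul_of_nonneg_right hBE (norm_nonneg u))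
    have h4 : 0 ≤ ‖u‖ := norm_nonneg u
    calc RCLike.re (inner ℂ (A u) u : ℂ) ≤ ‖(B * E) u‖ * ‖u‖ := le_trans h1 h2
    _ ≤ (ε * ‖u‖) * ‖u‖ := mul_le_mul_of_nonneg_right h3 h4
    _ = ε * ‖u‖ ^ 2 := by ring
  -- T and the key kernel identification
  set T : H →L[ℂ] H := (1 - E) * P with hTdef
  have h1mEsa : IsSelfAdjoint ((1 : H →L[ℂ] H) - E) := by
    rw [IsSelfAdjoint, star_sub, star_one, hEsa.star_eq]
  have h1mEM : (1 : H →L[ℂ] H) - E ∈ M := sub_mem (one_mem M) hEM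
  have hTM : T ∈ M := mul_mem h1mEM hPM
  have hkerTP : ∀ x, T x = 0 → P x = 0 := by
    intro x hx
    set u := P x with hu
    have hEu : E u = u := by
      rw [hTdef, mul_apply_eq_comp, sub_apply, one_apply_eq_self] at hx
      exact (sub_eq_zero.1 hx).symm
    have hucl : u ∈ closure (Set.range R₀) := hPmem_cl x
    have hNu : A u = ε • u + R₀ u := by
      set N : H →L[ℂ] H := A - ε • 1 - R₀ with hN
      have hNR₀ : N * R₀ = 0 := by
        rw [hN, sub_mul, sub_mul, smul_mul_assoc, one_mul, hAR₀]
        abel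
      have hclosed : IsClosed {y : H | N y = 0} := isClosed_eq N.continuous continuous_const
      have hsubset : Set.range R₀ ⊆ {y : H | N y = 0} := by
        rintro _ ⟨z, rfl⟩
        show N (R₀ z) = 0
        rw [← mul_apply_eq_comp, hNR₀, zero_apply]
      have hNu0 : N u = 0 := closure_minimal hsubset hclosed hucl
      rw [hN, sub_apply, sub_apply, smul_apply, one_apply_eq_self] at hNu0
      rw [sub_sub, sub_eq_zero] at hNu0
      exact hNu0
    have hre : RCLike.re (inner ℂ (A u) u : ℂ) = ε * ‖u‖ ^ 2 + RCLike.re (inner ℂ (R₀ u) u : ℂ) := by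
      rw [hNu, inner_add_left, map_add, re_inner_real_smul]
    have h6 : RCLike.re (inner ℂ (R₀ u) u : ℂ) ≤ 0 := by
      have := hEA u hEu
      linarith [hre]
    have hR₀u : R₀ u = 0 := ker_of_re_inner_nonpos hR₀pos h6
    have h7 : (inner ℂ u u : ℂ) = 0 := by
      have hclosed2 : IsClosed {y : H | (inner ℂ u y : ℂ) = 0} :=
        isClosed_eq (Continuous.inner continuous_const continuous_id) continuous_const
      have hsubset2 : Set.range R₀ ⊆ {y : H | (inner ℂ u y : ℂ) = 0} := by
        rintro _ ⟨z, rfl⟩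
        show (inner ℂ u (R₀ z) : ℂ) = 0
        have hsym := isSelfAdjoint_iff_isSymmetric.1 hR₀sa u z
        simp only [ContinuousLinearMap.coe_coe] at hsym
        rw [← hsym, hR₀u, inner_zero_left]
      exact closure_minimal hsubset2 hclosed2 hucl
    exact inner_self_eq_zero.1 h7
  -- Y and its square root
  set Y : H →L[ℂ] H := star T * T with hYdef
  have hYpos : (0 : H →L[ℂ] H) ≤ Y := by
    rw [nonneg_iff_isPositive, isPositive_def']
    constructor
    · rw [IsSelfAdjoint, hYdef, star_mul, star_star]
    · intro x
      rw [reApplyInnerSelf_apply, hYdef, mul_apply_eq_comp, star_eq_adjoint, adjoint_inner_left,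
        inner_self_eq_norm_sq]
      positivity
  have hYsa : IsSelfAdjoint Y := ((nonneg_iff_isPositive Y).1 hYpos).isSelfAdjoint
  have hYM : Y ∈ M := mul_mem (star_mem hTM) hTM
  set Rop : H →L[ℂ] H := cfc Real.sqrt Y with hRopdef
  have hRoppos : (0 : H →L[ℂ] H) ≤ Rop := cfc_nonneg (fun x _ => Real.sqrt_nonneg x)
  have hRopsa : IsSelfAdjoint Rop := cfc_predicate _ _
  have hRopM : Rop ∈ M := cfc_mem hYM hYsa _
  have hRR : Rop * Rop = Y := sqrt_mul_self_op hYpos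
  have hTRnorm : ∀ x, ‖T x‖ = ‖Rop x‖ := by
    intro x
    have h1 : ‖Rop x‖ ^ 2 = RCLike.re (inner ℂ (Y x) x : ℂ) := by
      rw [← re_inner_sq hRopsa x, hRR]
    have h2 : RCLike.re (inner ℂ (Y x) x : ℂ) = ‖T x‖ ^ 2 := by
      rw [hYdef, mul_apply_eq_comp, star_eq_adjoint, adjoint_inner_left, inner_self_eq_norm_sq]
    have h3 : ‖T x‖ ^ 2 = ‖Rop x‖ ^ 2 := by rw [h1, h2]
    calc ‖T x‖ = Real.sqrt (‖T x‖ ^ 2) := (Real.sqrt_sq (norm_nonneg _)).symm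
    _ = Real.sqrt (‖Rop x‖ ^ 2) := by rw [h3]
    _ = ‖Rop x‖ := Real.sqrt_sq (norm_nonneg _)
  have hYP : Y * (1 - P) = 0 := by
    have hPP' : P * (1 - P) = 0 := by rw [mul_sub, mul_one, hPP, sub_self]
    rw [hYdef, hTdef, mul_assoc, mul_assoc, hPP', mul_zero, mul_zero]
  have hRop1P : ∀ u : H, Rop ((1 - P) u) = 0 := by
    intro u
    have hYu : Y ((1 - P) u) = 0 := by rw [← mul_apply_eq_comp, hYP, zero_apply]
    rw [hRopdef, cfc_apply_ker hYpos Real.sqrt Real.continuous_sqrt.continuousOn hYu,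
      Real.sqrt_zero, zero_smul]
  have hPRop : P * Rop = Rop := by
    have h1 : Rop * (1 - P) = 0 := by
      ext u; rw [mul_apply_eq_comp, hRop1P u, zero_apply]
    have h2 : (1 - P) * Rop = 0 := by
      have := congrArg star h1
      rwa [star_mul, star_zero, hRopsa.star_eq,
        (show star ((1 : H →L[ℂ] H) - P) = 1 - P by rw [star_sub, star_one, hPsa.star_eq])] at this
    have h3 := h2
    rw [sub_mul, one_mul, sub_eq_zero] at h3
    exact h3.symm
  have hkerRT : ∀ y, Rop y = 0 → T y = 0 := fun y hy =>
    norm_eq_zero.1 (by rw [hTRnorm, hy, norm_zero])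
  -- Machine 2 : the partial isometry v
  obtain ⟨v, hvt, hvbd, hvR, hvker⟩ := polar_machine (T := T) (R := Rop) hRoppos hTRnorm
  have hvM : v ∈ M := machine_mem hTM hRopM hRopsa hvt
  have hvnorm : ‖v‖ ≤ 1 := opNorm_le_bound v zero_le_one (fun x => by simpa using hvbd x)
  have hEv : E * v = 0 := by
    ext x
    rw [mul_apply_eq_comp, zero_apply]
    have h1 : Tendsto (fun n : ℕ =>
        E ((T * cfc (fun l : ℝ => (l + ((n:ℝ)+1)⁻¹)⁻¹) Rop) x)) atTop (nhds (E (v x))) :=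
      (E.continuous.tendsto _).comp (hvt x)
    have hE1E : E * (1 - E) = 0 := by rw [mul_sub, mul_one, hEidem.eq, sub_self]
    have h2 : (fun n : ℕ => E ((T * cfc (fun l : ℝ => (l + ((n:ℝ)+1)⁻¹)⁻¹) Rop) x))
        = fun _ => (0 : H) := by
      funext n
      rw [← mul_apply_eq_comp E]
      have h3 : E * (T * cfc (fun l : ℝ => (l + ((n:ℝ)+1)⁻¹)⁻¹) Rop) = 0 := by
        rw [hTdef, ← mul_assoc, ← mul_assoc, hE1E, zero_mul, zero_mul]
      rw [h3, zero_apply]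
    rw [h2] at h1
    exact tendsto_nhds_unique h1 tendsto_const_nhds
  -- star v * v = P
  have hvTz : ∀ z : H, star v (T z) = Rop z := by
    intro z
    apply eq_of_forall_inner_eq (dense_range_sup_ker hRopsa)
    intro u hu
    obtain ⟨a, ha, b, hb, rfl⟩ := Submodule.mem_sup.1 hu
    obtain ⟨z', rfl⟩ := LinearMap.mem_range.1 ha
    have hbk : Rop b = 0 := LinearMap.mem_ker.1 hb
    rw [star_eq_adjoint, adjoint_inner_left]
    rw [map_add, hvker b hbk, add_zero]
    have hvRz' : v (Rop z') = T z' := by rw [← mul_apply_eq_comp, hvR]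
    rw [ContinuousLinearMap.coe_coe, hvRz', inner_add_right]
    have h1 : (inner ℂ (T z) (T z') : ℂ) = inner ℂ (Rop z) (Rop z') := by
      have h2 : (inner ℂ ((star T * T) z) z' : ℂ) = inner ℂ (T z) (T z') := by
        rw [mul_apply_eq_comp, star_eq_adjoint, adjoint_inner_left]
      have h3 : (inner ℂ ((Rop * Rop) z) z' : ℂ) = inner ℂ (Rop z) (Rop z') := by
        rw [mul_apply_eq_comp]
        have hsym := isSelfAdjoint_iff_isSymmetric.1 hRopsa (Rop z) z'
        simpa using hsym
      rw [← h2, ← hYdef, ← hRR, h3]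
    have h4 : (inner ℂ (Rop z) b : ℂ) = 0 := by
      have hsym := isSelfAdjoint_iff_isSymmetric.1 hRopsa z b
      simp only [ContinuousLinearMap.coe_coe] at hsym
      rw [hsym, hbk, inner_zero_right]
    rw [h1, h4, add_zero]
  have hvv : star v * v = P := by
    apply ContinuousLinearMap.ext_on
      (s := ((LinearMap.range (Rop : H →ₗ[ℂ] H) ⊔ LinearMap.ker (Rop : H →ₗ[ℂ] H) : Submodule ℂ H) : Set H))
      (by rw [Submodule.span_eq]; exact dense_range_sup_ker hRopsa)
    intro u hu
    obtain ⟨a, ha, b, hb, rfl⟩ := Submodule.mem_sup.1 hu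
    obtain ⟨z', rfl⟩ := LinearMap.mem_range.1 ha
    have hbk : Rop b = 0 := LinearMap.mem_ker.1 hb
    have hvRz' : v (Rop z') = T z' := by rw [← mul_apply_eq_comp, hvR]
    have hPb : P b = 0 := hkerTP b (hkerRT b hbk)
    have hPRz' : P (Rop z') = Rop z' := by
      have := DFunLike.congr_fun hPRop z'
      rwa [mul_apply_eq_comp] at this
    simp only [ContinuousLinearMap.coe_coe, mul_apply_eq_comp, map_add, hvker b hbk, map_zero, add_zero, hvRz', hvTz z',
      hPb, hPRz']
  -- trace comparison
  set W : H →L[ℂ] H := v * star v with hWdef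
  have hWM : W ∈ M := mul_mem hvM (star_mem hvM)
  have hWsa : IsSelfAdjoint W := by rw [IsSelfAdjoint, hWdef, star_mul, star_star]
  have hW1 : (0 : H →L[ℂ] H) ≤ 1 - W := by
    rw [nonneg_iff_isPositive, isPositive_def']
    constructor
    · rw [IsSelfAdjoint, star_sub, star_one, hWsa.star_eq]
    · intro x
      rw [reApplyInnerSelf_apply, sub_apply, one_apply_eq_self, inner_sub_left, map_sub]
      have h1 : RCLike.re (inner ℂ (W x) x : ℂ) = ‖star v x‖ ^ 2 := by
        rw [hWdef, mul_apply_eq_comp]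
        have h2 : (inner ℂ (v (star v x)) x : ℂ) = inner ℂ (star v x) (star v x) := by
          rw [← adjoint_inner_right, ← star_eq_adjoint]
        rw [h2, inner_self_eq_norm_sq]
      have h3 : ‖star v x‖ ≤ ‖x‖ := by
        calc ‖star v x‖ ≤ ‖star v‖ * ‖x‖ := le_opNorm _ _
        _ ≤ 1 * ‖x‖ := by
            apply mul_le_mul_of_nonneg_right _ (norm_nonneg x)
            rw [norm_star]; exact hvnorm
        _ = ‖x‖ := one_mul _
      have h4 : RCLike.re (inner ℂ x x : ℂ) = ‖x‖ ^ 2 := inner_self_eq_norm_sq x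
      rw [h1, h4]
      nlinarith [norm_nonneg (star v x), norm_nonneg x]
  have h1mWsa : IsSelfAdjoint ((1 : H →L[ℂ] H) - W) :=
    ((nonneg_iff_isPositive _).1 hW1).isSelfAdjoint
  have h1mWM : (1 : H →L[ℂ] H) - W ∈ M := sub_mem (one_mem M) hWM
  set sq : H →L[ℂ] H := cfc Real.sqrt (1 - W) with hsqdef
  have hsqsa : IsSelfAdjoint sq := cfc_predicate _ _
  have hsqM : sq ∈ M := cfc_mem h1mWM h1mWsa _
  have hss : sq * sq = 1 - W := sqrt_mul_self_op hW1
  have h1mEv : (1 - E) * v = v := by rw [sub_mul, one_mul, hEv, sub_zero]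
  have hWE : (1 - E) * W = W := by rw [hWdef, ← mul_assoc, h1mEv]
  have hEW : W * (1 - E) = W := by
    have := congrArg star hWE
    rwa [star_mul, hWsa.star_eq, h1mEsa.star_eq] at this
  set c : H →L[ℂ] H := sq * (1 - E) with hcdef
  have hcM : c ∈ M := mul_mem hsqM h1mEM
  have h1E1E : ((1 : H →L[ℂ] H) - E) * (1 - E) = 1 - E := by
    rw [mul_sub, mul_one, sub_mul, one_mul, hEidem.eq]
    abel
  have hcc : star c * c = (1 - E) - W := by
    rw [hcdef, star_mul, h1mEsa.star_eq, hsqsa.star_eq]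
    rw [mul_assoc, ← mul_assoc sq sq, hss]
    rw [sub_mul (1 : H →L[ℂ] H) W (1 - E), one_mul, hEW]
    rw [mul_sub, hWE, h1E1E]
  have hτ1 : 0 ≤ τ ((1 - E) - W) := by rw [← hcc]; exact hpos c hcM
  have hτ2 : τ W ≤ τ (1 - E) := by
    rw [map_sub] at hτ1
    exact sub_nonneg.1 hτ1
  have hτP : τ P = τ W := by
    rw [← hvv, hWdef]
    exact htrace (star v) (star_mem hvM) v hvM
  have hτPδ : τ P ≤ (δ : ℂ) := le_trans (le_of_eq hτP) (le_trans hτ2 hτE)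
  -- assemble
  refine ⟨hAM, 1 - P, sub_mem (one_mem M) hPM, ?_, ?_, ?_, ?_⟩
  · show ((1 : H →L[ℂ] H) - P) * (1 - P) = 1 - P
    rw [mul_sub, mul_one, sub_mul, one_mul, hPP]
    abel
  · rw [IsSelfAdjoint, star_sub, star_one, hPsa.star_eq]
  · apply opNorm_le_bound _ hε.le
    intro x
    rcases subsingleton_or_nontrivial H with hsub | hnt
    · have hz0 : (A * (1 - P)) x = 0 := Subsingleton.elim _ _
      rw [hz0, norm_zero]
      positivity
    rw [mul_apply_eq_comp]
    set u := ((1 : H →L[ℂ] H) - P) x with hu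
    have hR₀u : R₀ u = 0 := by
      have h1 : R₀ * (1 - P) = 0 := by rw [mul_sub, mul_one, hR₀P, sub_self]
      rw [hu, ← mul_apply_eq_comp, h1, zero_apply]
    have hAA : A * A ≤ (ε^2) • (1 : H →L[ℂ] H) + (‖A‖ + ε) • R₀ := by
      have hptw : ∀ l ∈ spectrum ℝ A, l * l ≤ ε^2 + (‖A‖ + ε) * g l := by
        intro l hl
        have h0 : 0 ≤ l := spectrum_nonneg_of_nonneg hA0 hl
        have h1 : l ≤ ‖A‖ := by
          have := spectrum.norm_le_norm_of_mem hl
          rwa [Real.norm_eq_abs, abs_of_nonneg h0] at this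
        rcases le_or_gt l ε with h2 | h2
        · have hgl : g l = 0 := max_eq_right (by linarith)
          rw [hgl]; nlinarith
        · have hgl : g l = l - ε := max_eq_left (by linarith)
          rw [hgl]; nlinarith
      have hca : cfc (fun l : ℝ => l * l) A = A * A := by
        rw [cfc_mul (fun l => l) (fun l => l) A continuousOn_id continuousOn_id,
          cfc_id' ℝ A hAsa]
      have hcb : cfc (fun l : ℝ => ε^2 + (‖A‖ + ε) * g l) A
          = (ε^2) • (1 : H →L[ℂ] H) + (‖A‖ + ε) • R₀ := by
        rw [cfc_add A (fun _ => ε^2) (fun l => (‖A‖ + ε) * g l) continuousOn_const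
          (continuousOn_const.mul hgcont.continuousOn), cfc_const (ε^2) A hAsa,
          cfc_const_mul (‖A‖ + ε) g A hgcont.continuousOn, Algebra.algebraMap_eq_smul_one]
      calc A * A = cfc (fun l : ℝ => l * l) A := hca.symm
      _ ≤ cfc (fun l : ℝ => ε^2 + (‖A‖ + ε) * g l) A := by
          apply cfc_mono hptw (continuousOn_id.mul continuousOn_id)
      _ = _ := hcb
    have hnorm2 : ‖A u‖ ^ 2 ≤ ε^2 * ‖u‖ ^ 2 := by
      have h1 := re_inner_le_of_le hAA u
      rw [re_inner_sq hAsa] at h1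
      have h2 : ((ε^2) • (1 : H →L[ℂ] H) + (‖A‖ + ε) • R₀) u = (ε^2 : ℝ) • u := by
        rw [add_apply, smul_apply, smul_apply, one_apply_eq_self, hR₀u, smul_zero, add_zero]
      rw [h2, re_inner_real_smul] at h1
      exact h1
    have h3 : ‖A u‖ ≤ ε * ‖u‖ := by
      have h4 : (0:ℝ) ≤ ε * ‖u‖ := by positivity
      nlinarith [norm_nonneg (A u)]
    have h5 : ‖u‖ ≤ ‖x‖ := by
      apply norm_idem_sa_apply_le
      · rw [mul_sub, mul_one, sub_mul, one_mul, hPP]; abel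
      · rw [IsSelfAdjoint, star_sub, star_one, hPsa.star_eq]
    calc ‖A u‖ ≤ ε * ‖u‖ := h3
    _ ≤ ε * ‖x‖ := mul_le_mul_of_nonneg_left h5 hε.le
  · rw [sub_sub_cancel]
    refine le_trans hτPδ ?_
    rw [show ((2 * δ : ℝ) : ℂ) = ((2*δ : ℝ) : ℂ) from rfl]
    rw [Complex.real_le_real]
    linarith
end
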